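/- Let T be a triangulated category, Σf₃, Σf₂, Σf₁ the suspensions of composable maps X₀ →f₁ X₁ →f₂ X₂ →f₃ X₃. Then the three-fold Toda bracket satisfies ⟨Σf₃, Σf₂, Σf₁⟩ = −Σ⟨f₃, f₂, f₁⟩ as subsets of T(Σ²X₀, ΣX₃); i.e., ψ ∈ ⟨f₃,f₂,f₁⟩ if and only if −Σψ ∈ ⟨Σf₃, Σf₂, Σf₁⟩. -/

import Mathlib

open CategoryTheory Category Limits Pretriangulated

variable {C : Type*} [Category C] [Preadditive C] [HasZeroObject C]
  [HasShift C ℤ] [∀ n : ℤ, (shiftFunctor C n).Additive] [Pretriangulated C]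

/-- The fiber-cofiber Toda bracket `⟨f₃, f₂, f₁⟩_fc`: all composites `β ∘ Σα` where,
for a distinguished triangle `F ⟶ X₁ ⟶ X₂ ⟶ ΣF` (so `F = Σ⁻¹C_{f₂}` and `ΣF = C_{f₂}`),
`α : X₀ ⟶ F` lifts `f₁` and `β : ΣF ⟶ X₃` extends `f₃`. -/
def fcBracket {X₀ X₁ X₂ X₃ : C} (f₁ : X₀ ⟶ X₁) (f₂ : X₁ ⟶ X₂) (f₃ : X₂ ⟶ X₃) :
    Set (X₀⟦(1:ℤ)⟧ ⟶ X₃) :=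
  { ψ | ∃ (F : C) (j : F ⟶ X₁) (q : X₂ ⟶ F⟦(1:ℤ)⟧)
      (_ : Triangle.mk j f₂ q ∈ distTriang C)
      (α : X₀ ⟶ F) (β : F⟦(1:ℤ)⟧ ⟶ X₃),
      α ≫ j = f₁ ∧ q ≫ β = f₃ ∧ ψ = α⟦(1:ℤ)⟧' ≫ β }

/-- The iterated cofiber Toda bracket `⟨f₃, f₂, f₁⟩_cc`. -/
def ccBracket {X₀ X₁ X₂ X₃ : C} (f₁ : X₀ ⟶ X₁) (f₂ : X₁ ⟶ X₂) (f₃ : X₂ ⟶ X₃) :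
    Set (X₀⟦(1:ℤ)⟧ ⟶ X₃) :=
  { ψ | ∃ (Cf : C) (q : X₁ ⟶ Cf) (ι : Cf ⟶ X₀⟦(1:ℤ)⟧)
      (_ : Triangle.mk f₁ q ι ∈ distTriang C)
      (φ : Cf ⟶ X₂), q ≫ φ = f₂ ∧ φ ≫ f₃ = ι ≫ ψ }

/-- The iterated fiber Toda bracket `⟨f₃, f₂, f₁⟩_ff`. -/
def ffBracket {X₀ X₁ X₂ X₃ : C} (f₁ : X₀ ⟶ X₁) (f₂ : X₁ ⟶ X₂) (f₃ : X₂ ⟶ X₃) :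
    Set (X₀⟦(1:ℤ)⟧ ⟶ X₃) :=
  { ψ | ∃ (G : C) (j : X₃⟦(-1:ℤ)⟧ ⟶ G) (κ : G ⟶ X₂)
      (_ : Triangle.mk j κ
        (f₃ ≫ (shiftFunctorCompIsoId C (-1:ℤ) (1:ℤ) (neg_add_cancel 1)).inv.app X₃) ∈
          distTriang C)
      (γ : X₁ ⟶ G) (δ : X₀ ⟶ X₃⟦(-1:ℤ)⟧),
      γ ≫ κ = f₂ ∧ f₁ ≫ γ = δ ≫ j ∧
      ψ = δ⟦(1:ℤ)⟧' ≫ (shiftFunctorCompIsoId C (-1:ℤ) (1:ℤ) (neg_add_cancel 1)).hom.app X₃ }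

set_option linter.unusedSectionVars false in
lemma myComm_eq (i j : ℤ) (h : i + j = 0) (h' : j + i = 0) (Y : C) :
    (shiftFunctorComm C i j).hom.app Y =
      (shiftFunctorCompIsoId C i j h).hom.app Y ≫ (shiftFunctorCompIsoId C j i h').inv.app Y := by
  rw [shiftFunctorComm_eq C i j 0 h]
  dsimp [shiftFunctorCompIsoId]
  simp

set_option linter.unusedSectionVars false in
lemma myComm_inv_eq (i j : ℤ) (h : i + j = 0) (h' : j + i = 0) (Y : C) :
    (shiftFunctorComm C i j).inv.app Y =
      (shiftFunctorCompIsoId C j i h').hom.app Y ≫ (shiftFunctorCompIsoId C i j h).inv.app Y := by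
  rw [← cancel_epi ((shiftFunctorComm C i j).hom.app Y), Iso.hom_inv_id_app,
    myComm_eq i j h h']
  simp

set_option maxHeartbeats 1000000 in
/-- The Toda bracket of the suspensions is the negative of the suspension of the Toda
bracket: `⟨Σf₃, Σf₂, Σf₁⟩ = −Σ⟨f₃, f₂, f₁⟩` as subsets of `T(Σ²X₀, ΣX₃)`; that is,
`ψ ∈ ⟨f₃, f₂, f₁⟩` if and only if `−Σψ ∈ ⟨Σf₃, Σf₂, Σf₁⟩`. -/
theorem todaBracket_shift_neg {X₀ X₁ X₂ X₃ : C}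
    (f₁ : X₀ ⟶ X₁) (f₂ : X₁ ⟶ X₂) (f₃ : X₂ ⟶ X₃) (ψ : X₀⟦(1:ℤ)⟧ ⟶ X₃) :
    ψ ∈ fcBracket f₁ f₂ f₃ ↔
      -(ψ⟦(1:ℤ)⟧') ∈ fcBracket (f₁⟦(1:ℤ)⟧') (f₂⟦(1:ℤ)⟧') (f₃⟦(1:ℤ)⟧') := by
  constructor
  · rintro ⟨F, j, q, hT, α, β, hα, hβ, hψ⟩
    refine ⟨F⟦(1:ℤ)⟧, j⟦(1:ℤ)⟧', -(q⟦(1:ℤ)⟧'), ?_, α⟦(1:ℤ)⟧', -(β⟦(1:ℤ)⟧'), ?_, ?_, ?_⟩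
    · refine isomorphic_distinguished _ (Triangle.shift_distinguished _ hT 1) _ ?_
      refine Triangle.isoMk _ _ (Iso.refl _) ⟨-𝟙 _, -𝟙 _, (Preadditive.neg_comp_neg _ _).trans (comp_id _),
        (Preadditive.neg_comp_neg _ _).trans (comp_id _)⟩ (Iso.refl _)
        ?_ ?_ ?_
      · show j⟦(1:ℤ)⟧' ≫ (-𝟙 (X₁⟦(1:ℤ)⟧)) = 𝟙 (F⟦(1:ℤ)⟧) ≫ ((1:ℤ).negOnePow • j⟦(1:ℤ)⟧'); simp
      · show f₂⟦(1:ℤ)⟧' ≫ 𝟙 (X₂⟦(1:ℤ)⟧) = (-𝟙 (X₁⟦(1:ℤ)⟧)) ≫ ((1:ℤ).negOnePow • f₂⟦(1:ℤ)⟧'); simp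
      · show (-(q⟦(1:ℤ)⟧')) ≫ (𝟙 (F⟦(1:ℤ)⟧))⟦(1:ℤ)⟧' =
          𝟙 (X₂⟦(1:ℤ)⟧) ≫ ((1:ℤ).negOnePow • q⟦(1:ℤ)⟧' ≫ (shiftFunctorComm C 1 1).hom.app F)
        simp [shiftFunctorComm_eq_refl]
    · rw [← Functor.map_comp, hα]
    · rw [Preadditive.neg_comp_neg, ← Functor.map_comp, hβ]
    · rw [hψ, Functor.map_comp, Preadditive.comp_neg]
  · rintro ⟨F', j', q', hT, α', β', hα, hβ, hψ⟩
    refine ⟨F'⟦(-1:ℤ)⟧,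
      j'⟦(-1:ℤ)⟧' ≫ (shiftFunctorCompIsoId C 1 (-1) (add_neg_cancel 1)).hom.app X₁,
      -((shiftFunctorCompIsoId C 1 (-1) (add_neg_cancel 1)).inv.app X₂ ≫ q'⟦(-1:ℤ)⟧' ≫
        (shiftFunctorComm C 1 (-1)).hom.app F'), ?_,
      (shiftFunctorCompIsoId C 1 (-1) (add_neg_cancel 1)).inv.app X₀ ≫ α'⟦(-1:ℤ)⟧',
      -((shiftFunctorComm C 1 (-1)).inv.app F' ≫ β'⟦(-1:ℤ)⟧' ≫
        (shiftFunctorCompIsoId C 1 (-1) (add_neg_cancel 1)).hom.app X₃), ?_, ?_, ?_⟩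
    · refine isomorphic_distinguished _ (Triangle.shift_distinguished _ hT (-1)) _ ?_
      refine Triangle.isoMk _ _ (Iso.refl _)
        ⟨-((shiftFunctorCompIsoId C 1 (-1) (add_neg_cancel 1)).inv.app X₁),
         -((shiftFunctorCompIsoId C 1 (-1) (add_neg_cancel 1)).hom.app X₁),
         (Preadditive.neg_comp_neg _ _).trans (Iso.inv_hom_id_app _ _),
         (Preadditive.neg_comp_neg _ _).trans (Iso.hom_inv_id_app _ _)⟩
        ((shiftFunctorCompIsoId C 1 (-1) (add_neg_cancel 1)).symm.app X₂) ?_ ?_ ?_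
      · show (j'⟦(-1:ℤ)⟧' ≫ (shiftFunctorCompIsoId C 1 (-1) (add_neg_cancel 1)).hom.app X₁) ≫ (-(shiftFunctorCompIsoId C 1 (-1) (add_neg_cancel 1)).inv.app X₁) =
          𝟙 (F'⟦(-1:ℤ)⟧) ≫ ((-1:ℤ).negOnePow • j'⟦(-1:ℤ)⟧'); simp
      · show f₂ ≫ (shiftFunctorCompIsoId C 1 (-1) (add_neg_cancel 1)).inv.app X₂ =
          (-(shiftFunctorCompIsoId C 1 (-1) (add_neg_cancel 1)).inv.app X₁) ≫ ((-1:ℤ).negOnePow • (f₂⟦(1:ℤ)⟧')⟦(-1:ℤ)⟧')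
        simp only [Preadditive.comp_neg, Preadditive.neg_comp, Functor.comp_map]
        have := ((shiftFunctorCompIsoId C 1 (-1) (add_neg_cancel 1)).inv.naturality f₂)
        dsimp at this
        simp [this]
      · show (-((shiftFunctorCompIsoId C 1 (-1) (add_neg_cancel 1)).inv.app X₂ ≫ q'⟦(-1:ℤ)⟧' ≫ (shiftFunctorComm C 1 (-1)).hom.app F')) ≫
            (𝟙 (F'⟦(-1:ℤ)⟧))⟦(1:ℤ)⟧' =
          (shiftFunctorCompIsoId C 1 (-1) (add_neg_cancel 1)).inv.app X₂ ≫ ((-1:ℤ).negOnePow • q'⟦(-1:ℤ)⟧' ≫ (shiftFunctorComm C 1 (-1)).hom.app F')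
        simp
    · -- α ≫ j = f₁
      have := ((shiftFunctorCompIsoId C 1 (-1) (add_neg_cancel 1)).hom.naturality f₁)
      dsimp at this
      rw [assoc, ← Functor.map_comp_assoc, hα, this, Iso.inv_hom_id_app_assoc]
    · -- q ≫ β = f₃
      have := ((shiftFunctorCompIsoId C 1 (-1) (add_neg_cancel 1)).hom.naturality f₃)
      dsimp at this
      rw [Preadditive.neg_comp_neg]
      simp only [assoc, Iso.hom_inv_id_app_assoc]
      rw [← Functor.map_comp_assoc, hβ, this, Iso.inv_hom_id_app_assoc]
    · -- ψ = α⟦1⟧ ≫ β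
      have hnat : (α'⟦(-1:ℤ)⟧')⟦(1:ℤ)⟧' ≫ (shiftFunctorComm C 1 (-1)).inv.app F' =
          (shiftFunctorComm C 1 (-1)).inv.app (X₀⟦(1:ℤ)⟧) ≫ (α'⟦(1:ℤ)⟧')⟦(-1:ℤ)⟧' := by
        have := (shiftFunctorComm C 1 (-1)).inv.naturality α'
        dsimp at this; rw [this]
      have hnat2 : (ψ⟦(1:ℤ)⟧')⟦(-1:ℤ)⟧' ≫
            (shiftFunctorCompIsoId C 1 (-1) (add_neg_cancel 1)).hom.app X₃ =
          (shiftFunctorCompIsoId C 1 (-1) (add_neg_cancel 1)).hom.app (X₀⟦(1:ℤ)⟧) ≫ ψ := by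
        have := (shiftFunctorCompIsoId C 1 (-1) (add_neg_cancel 1)).hom.naturality ψ
        dsimp at this; rw [this]
      have key : ((shiftFunctorCompIsoId C 1 (-1) (add_neg_cancel 1)).inv.app X₀)⟦(1:ℤ)⟧' ≫
          (shiftFunctorComm C 1 (-1)).inv.app (X₀⟦(1:ℤ)⟧) ≫
          (shiftFunctorCompIsoId C 1 (-1) (add_neg_cancel 1)).hom.app (X₀⟦(1:ℤ)⟧) = 𝟙 _ := by
        rw [myComm_inv_eq 1 (-1) (add_neg_cancel 1) (neg_add_cancel 1)]
        have := shift_shiftFunctorCompIsoId_add_neg_cancel_inv_app (1 : ℤ) X₀ (C := C)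
        rw [this]
        simp
      have h4 := reassoc_of% hnat
      have h5 := reassoc_of% key
      rw [Functor.map_comp]
      simp only [Preadditive.neg_comp, Preadditive.comp_neg, assoc]
      rw [h4, ← Functor.map_comp_assoc, ← hψ]
      simp only [Functor.map_neg, Preadditive.neg_comp, Preadditive.comp_neg, neg_neg, assoc]
      rw [hnat2, h5]
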